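/- Let g : [x_0, x_P] → ℝ be the fractal interpolation function, i.e., the unique continuous function with g(x_0) = y_0, g(x_P) = y_P satisfying g(l_p(x)) = F_p(x, g(x)) for all x ∈ [x_0, x_P] and p = 1,...,P. Define Φ_p : [x_0, x_P] × ℝ → [x_0, x_P] × ℝ by Φ_p(x, y) = (l_p(x), F_p(x, y)). Then the graph G_g = {(x, g(x)) : x ∈ [x_0, x_P]} is a nonempty compact subset of ℝ² satisfying the invariance (attractor) equation G_g = ⋃_{p=1}^{P} Φ_p(G_g). -/

import Mathlib

/-- let `g` be the fractal interpolation function, i.e. the continuous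
function with `g (x 0) = y 0`, `g (x P) = y P` satisfying `g (l p s) = F p s (g s)`
for all `s ∈ [x 0, x P]`, `p = 1, ..., P`, and let
`Φ p (u, v) = (l p u, F p u v) = (a p * u + b p, F p u v)`. Then the graph
`G = {(s, g s) : s ∈ [x 0, x P]}` is a nonempty compact subset of ℝ² satisfying the
invariance (attractor) equation `G = ⋃_{p=1}^{P} Φ p (G)`. -/
theorem stmt_6 (P : ℕ) (hP : 1 ≤ P) (x y : ℕ → ℝ)
    (hx : ∀ i, i < P → x i < x (i + 1))
    (a b : ℕ → ℝ)
    (ha : ∀ p, 1 ≤ p → p ≤ P → 0 < a p)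
    (hl0 : ∀ p, 1 ≤ p → p ≤ P → a p * x 0 + b p = x (p - 1))
    (hlP : ∀ p, 1 ≤ p → p ≤ P → a p * x P + b p = x p)
    (F : ℕ → ℝ → ℝ → ℝ) (t : ℕ → ℝ)
    (hFcont : ∀ p, 1 ≤ p → p ≤ P →
      ContinuousOn (fun z : ℝ × ℝ => F p z.1 z.2) (Set.Icc (x 0) (x P) ×ˢ Set.univ))
    (hF0 : ∀ p, 1 ≤ p → p ≤ P → F p (x 0) (y 0) = y (p - 1))
    (hFP : ∀ p, 1 ≤ p → p ≤ P → F p (x P) (y P) = y p)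
    (ht : ∀ p, 1 ≤ p → p ≤ P → 0 < t p ∧ t p < 1)
    (hFlip : ∀ p, 1 ≤ p → p ≤ P → ∀ s ∈ Set.Icc (x 0) (x P), ∀ u v : ℝ,
      |F p s u - F p s v| ≤ t p * |u - v|)
    (g : ℝ → ℝ) (hg : ContinuousOn g (Set.Icc (x 0) (x P)))
    (hg0 : g (x 0) = y 0) (hgP : g (x P) = y P)
    (hfix : ∀ p, 1 ≤ p → p ≤ P → ∀ s ∈ Set.Icc (x 0) (x P),
      g (a p * s + b p) = F p s (g s)) :
    ((fun s : ℝ => (s, g s)) '' Set.Icc (x 0) (x P)).Nonempty ∧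
    IsCompact ((fun s : ℝ => (s, g s)) '' Set.Icc (x 0) (x P)) ∧
    (fun s : ℝ => (s, g s)) '' Set.Icc (x 0) (x P) =
      ⋃ p ∈ Set.Icc 1 P,
        (fun z : ℝ × ℝ => (a p * z.1 + b p, F p z.1 z.2)) ''
          ((fun s : ℝ => (s, g s)) '' Set.Icc (x 0) (x P)) := by

  -- monotonicity of x
  have hmono : ∀ i j : ℕ, i ≤ j → j ≤ P → x i ≤ x j := by
    intro i j hij hjP
    induction j with
    | zero => simp_all
    | succ n ih =>
      rcases Nat.lt_or_ge i (n+1) with h | h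
      · have : x i ≤ x n := ih (Nat.lt_succ_iff.mp h) (le_trans (Nat.le_succ n) hjP)
        exact le_trans this (le_of_lt (hx n (Nat.lt_of_succ_le hjP)))
      · have : i = n + 1 := le_antisymm hij h
        simp [this]
  have hx0P : x 0 ≤ x P := hmono 0 P (Nat.zero_le P) le_rfl
  refine ⟨⟨(x 0, g (x 0)), ⟨x 0, ⟨le_rfl, hx0P⟩, rfl⟩⟩, ?_, ?_⟩
  · exact (isCompact_Icc.image_of_continuousOn
      (continuousOn_id.prodMk hg))
  · apply Set.Subset.antisymm
    · rintro z ⟨s, hs, rfl⟩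
      -- find p with x (p-1) ≤ s ≤ x p
      have hsP : s ≤ x P := hs.2
      have hex : ∃ n, s ≤ x n := ⟨P, hsP⟩
      classical
      set p0 := Nat.find hex with hp0
      have hp0P : p0 ≤ P := Nat.find_le hsP
      have hsp0 : s ≤ x p0 := Nat.find_spec hex
      have key : ∃ p, 1 ≤ p ∧ p ≤ P ∧ x (p-1) ≤ s ∧ s ≤ x p := by
        rcases Nat.eq_zero_or_pos p0 with h0 | h1
        · refine ⟨1, le_rfl, hP, ?_, ?_⟩
          · simpa using hs.1
          · have : s ≤ x 0 := h0 ▸ hsp0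
            exact le_trans this (hmono 0 1 (Nat.zero_le 1) hP)
        · refine ⟨p0, h1, hp0P, ?_, hsp0⟩
          have := Nat.find_min hex (m := p0 - 1) (by omega)
          push_neg at this
          exact le_of_lt this
      obtain ⟨p, hp1, hpP, hle1, hle2⟩ := key
      have hap := ha p hp1 hpP
      have hane : a p ≠ 0 := ne_of_gt hap
      set u := (s - b p) / a p with hu
      have hlu : a p * u + b p = s := by rw [hu, mul_div_assoc', mul_div_cancel_left₀ _ hane]; ring
      have hxp1 : x 0 ≤ x (p-1) := hmono 0 (p-1) (Nat.zero_le _) (by omega)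
      have hxpP : x p ≤ x P := hmono p P hpP le_rfl
      have humem : u ∈ Set.Icc (x 0) (x P) := by
        constructor
        · rw [hu, le_div_iff₀ hap]
          nlinarith [hl0 p hp1 hpP]
        · rw [hu, div_le_iff₀ hap]
          nlinarith [hlP p hp1 hpP]
      have hgs : g s = F p u (g u) := by
        rw [← hlu]; exact hfix p hp1 hpP u humem
      refine Set.mem_iUnion₂.mpr ⟨p, ⟨hp1, hpP⟩, ⟨(u, g u), ⟨u, humem, rfl⟩, ?_⟩⟩
      simp [hlu, ← hgs]
    · rintro z hz
      rw [Set.mem_iUnion₂] at hz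
      obtain ⟨p, ⟨hp1, hpP⟩, ⟨w, ⟨u, hu, rfl⟩, rfl⟩⟩ := hz
      have hap := ha p hp1 hpP
      have hxp1 : x 0 ≤ x (p-1) := hmono 0 (p-1) (Nat.zero_le _) (by omega)
      have hxpP : x p ≤ x P := hmono p P hpP le_rfl
      have hmem : a p * u + b p ∈ Set.Icc (x 0) (x P) := by
        constructor
        · nlinarith [hl0 p hp1 hpP, hu.1]
        · nlinarith [hlP p hp1 hpP, hu.2]
      refine ⟨a p * u + b p, hmem, ?_⟩
      simp [hfix p hp1 hpP u hu]
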